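/- For any n ≥ 1, every induced-subgraph embedding of the grid X_{n,4n−1} into an X-grid X_{M,N} (M ≥ n, N ≥ 4n−1) contains a copy of X_{n,n} occupying exactly n contiguous columns of X_{M,N}, with each column of X_{n,n} mapped into a single column of X_{M,N}. -/

import Mathlib

/-- The X-grid `X_{m,k}` (m columns, k rows, 0-indexed): consecutive columns
induce a chain graph, `x_{i,j} ~ x_{i+1,j'}` iff `j ≥ j'`. -/
def Xgrid (m k : ℕ) : SimpleGraph (Fin m × Fin k) :=
  SimpleGraph.fromRel (fun u v => v.1.val = u.1.val + 1 ∧ v.2.val ≤ u.2.val)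

namespace XgridAux

lemma xgrid_adj {m k : ℕ} {u v : Fin m × Fin k} :
    (Xgrid m k).Adj u v ↔
      ((v.1 : ℕ) = (u.1 : ℕ) + 1 ∧ (v.2 : ℕ) ≤ (u.2 : ℕ)) ∨
      ((u.1 : ℕ) = (v.1 : ℕ) + 1 ∧ (u.2 : ℕ) ≤ (v.2 : ℕ)) := by
  unfold Xgrid
  rw [SimpleGraph.fromRel_adj]
  constructor
  · rintro ⟨-, h⟩; exact h
  · intro h
    refine ⟨?_, h⟩
    rintro rfl
    omega

variable {n k M N : ℕ}

/-- column of the image of vertex (i,j) -/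
def CC (φ : Xgrid n k ↪g Xgrid M N) (i j : ℕ) : ℕ :=
  if h : i < n ∧ j < k then ((φ (⟨i, h.1⟩, ⟨j, h.2⟩)).1 : ℕ) else 0

/-- row of the image of vertex (i,j) -/
def RR (φ : Xgrid n k ↪g Xgrid M N) (i j : ℕ) : ℕ :=
  if h : i < n ∧ j < k then ((φ (⟨i, h.1⟩, ⟨j, h.2⟩)).2 : ℕ) else 0

lemma CC_lt (φ : Xgrid n k ↪g Xgrid M N) {i j : ℕ} (hi : i < n) (hj : j < k) :
    CC φ i j < M := by
  simp only [CC, dif_pos (⟨hi, hj⟩ : i < n ∧ j < k)]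
  exact (φ (⟨i, hi⟩, ⟨j, hj⟩)).1.isLt

lemma CC_eq (φ : Xgrid n k ↪g Xgrid M N) (a : Fin n) (b : Fin k) :
    CC φ a.1 b.1 = ((φ (a, b)).1 : ℕ) := by
  simp only [CC, dif_pos (⟨a.isLt, b.isLt⟩ : (a:ℕ) < n ∧ (b:ℕ) < k)]

/-- The master pair lemma: adjacency data between column `i` and `i+1`. -/
lemma pair (φ : Xgrid n k ↪g Xgrid M N) {i j j' : ℕ} (hi : i + 1 < n)
    (hj : j < k) (hj' : j' < k) :
    ((CC φ (i+1) j' = CC φ i j + 1 ∧ RR φ (i+1) j' ≤ RR φ i j) ∨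
     (CC φ i j = CC φ (i+1) j' + 1 ∧ RR φ i j ≤ RR φ (i+1) j')) ↔ j' ≤ j := by
  have hi' : i < n := by omega
  have h := φ.map_rel_iff (a := (⟨i, hi'⟩, ⟨j, hj⟩)) (b := (⟨i+1, hi⟩, ⟨j', hj'⟩))
  rw [xgrid_adj, xgrid_adj] at h
  simp only [CC, RR, dif_pos (⟨hi', hj⟩ : i < n ∧ j < k),
    dif_pos (⟨hi, hj'⟩ : i + 1 < n ∧ j' < k)]
  constructor
  · intro hyp
    have := h.mp (by
      rcases hyp with ⟨h1, h2⟩ | ⟨h1, h2⟩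
      · exact Or.inl ⟨by simpa using h1, h2⟩
      · exact Or.inr ⟨by simpa using h1, h2⟩)
    simp only [] at this
    omega
  · intro hyp
    have := h.mpr (by simp; omega)
    rcases this with ⟨h1, h2⟩ | ⟨h1, h2⟩
    · exact Or.inl ⟨h1, h2⟩
    · exact Or.inr ⟨h1, h2⟩

/-- any column takes at most two values, which differ by 2 -/
lemma two_values (φ : Xgrid n k ↪g Xgrid M N) (hn : 2 ≤ n) {i j j' : ℕ}
    (hi : i < n) (hj : j < k) (hj' : j' < k) :
    CC φ i j = CC φ i j' ∨ CC φ i j = CC φ i j' + 2 ∨ CC φ i j' = CC φ i j + 2 := by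
  have hk0 : 0 < k := by omega
  by_cases hi1 : i + 1 < n
  · have P1 := pair φ hi1 hj hk0
    have P2 := pair φ hi1 hj' hk0
    omega
  · obtain ⟨m, rfl⟩ : ∃ m, i = m + 1 := ⟨i - 1, by omega⟩
    have hm : m + 1 < n := by omega
    have hk1 : k - 1 < k := by omega
    have P1 := pair φ hm hk1 hj
    have P2 := pair φ hm hk1 hj'
    omega


private lemma sjR_core (C R : ℕ → ℕ → ℕ) (i j1 j2 j3 kk : ℕ) (h12 : j1 < j2) (h23 : j2 < j3)
    (he : C i j1 = C i j3)
    (htv : C i j2 = C i j1 + 2 ∨ C i j1 = C i j2 + 2)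
    (P1 : ((C (i+1) j2 = C i j2 + 1 ∧ R (i+1) j2 ≤ R i j2) ∨ (C i j2 = C (i+1) j2 + 1 ∧ R i j2 ≤ R (i+1) j2)) ↔ j2 ≤ j2)
    (P2 : ((C (i+1) j2 = C i j3 + 1 ∧ R (i+1) j2 ≤ R i j3) ∨ (C i j3 = C (i+1) j2 + 1 ∧ R i j3 ≤ R (i+1) j2)) ↔ j2 ≤ j3)
    (P3 : ((C (i+1) j2 = C i j1 + 1 ∧ R (i+1) j2 ≤ R i j1) ∨ (C i j1 = C (i+1) j2 + 1 ∧ R i j1 ≤ R (i+1) j2)) ↔ j2 ≤ j1)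
    (P4 : ((C (i+1) j3 = C i j3 + 1 ∧ R (i+1) j3 ≤ R i j3) ∨ (C i j3 = C (i+1) j3 + 1 ∧ R i j3 ≤ R (i+1) j3)) ↔ j3 ≤ j3)
    (P5 : ((C (i+1) j3 = C i j1 + 1 ∧ R (i+1) j3 ≤ R i j1) ∨ (C i j1 = C (i+1) j3 + 1 ∧ R i j1 ≤ R (i+1) j3)) ↔ j3 ≤ j1)
    (P6 : ((C (i+1) 0 = C i j1 + 1 ∧ R (i+1) 0 ≤ R i j1) ∨ (C i j1 = C (i+1) 0 + 1 ∧ R i j1 ≤ R (i+1) 0)) ↔ 0 ≤ j1)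
    (P7 : ((C (i+1) 0 = C i j2 + 1 ∧ R (i+1) 0 ≤ R i j2) ∨ (C i j2 = C (i+1) 0 + 1 ∧ R i j2 ≤ R (i+1) 0)) ↔ 0 ≤ j2)
    (P8 : ((C (i+1) 0 = C i j3 + 1 ∧ R (i+1) 0 ≤ R i j3) ∨ (C i j3 = C (i+1) 0 + 1 ∧ R i j3 ≤ R (i+1) 0)) ↔ 0 ≤ j3)
    (P9 : ((C (i+1) j3 = C i j2 + 1 ∧ R (i+1) j3 ≤ R i j2) ∨ (C i j2 = C (i+1) j3 + 1 ∧ R i j2 ≤ R (i+1) j3)) ↔ j3 ≤ j2)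
    : False := by omega

private lemma sjL_core (C R : ℕ → ℕ → ℕ) (m j1 j2 j3 kk : ℕ) (h12 : j1 < j2) (h23 : j2 < j3) (h3 : j3 < kk)
    (he : C (m+1) j1 = C (m+1) j3)
    (htv : C (m+1) j2 = C (m+1) j1 + 2 ∨ C (m+1) j1 = C (m+1) j2 + 2)
    (P1 : ((C (m+1) j1 = C m j2 + 1 ∧ R (m+1) j1 ≤ R m j2) ∨ (C m j2 = C (m+1) j1 + 1 ∧ R m j2 ≤ R (m+1) j1)) ↔ j1 ≤ j2)
    (P2 : ((C (m+1) j2 = C m j2 + 1 ∧ R (m+1) j2 ≤ R m j2) ∨ (C m j2 = C (m+1) j2 + 1 ∧ R m j2 ≤ R (m+1) j2)) ↔ j2 ≤ j2)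
    (P3 : ((C (m+1) j3 = C m j2 + 1 ∧ R (m+1) j3 ≤ R m j2) ∨ (C m j2 = C (m+1) j3 + 1 ∧ R m j2 ≤ R (m+1) j3)) ↔ j3 ≤ j2)
    (P4 : ((C (m+1) j1 = C m j1 + 1 ∧ R (m+1) j1 ≤ R m j1) ∨ (C m j1 = C (m+1) j1 + 1 ∧ R m j1 ≤ R (m+1) j1)) ↔ j1 ≤ j1)
    (P5 : ((C (m+1) j2 = C m j1 + 1 ∧ R (m+1) j2 ≤ R m j1) ∨ (C m j1 = C (m+1) j2 + 1 ∧ R m j1 ≤ R (m+1) j2)) ↔ j2 ≤ j1)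
    (P6 : ((C (m+1) j3 = C m j1 + 1 ∧ R (m+1) j3 ≤ R m j1) ∨ (C m j1 = C (m+1) j3 + 1 ∧ R m j1 ≤ R (m+1) j3)) ↔ j3 ≤ j1)
    (P7 : ((C (m+1) j1 = C m (kk-1) + 1 ∧ R (m+1) j1 ≤ R m (kk-1)) ∨ (C m (kk-1) = C (m+1) j1 + 1 ∧ R m (kk-1) ≤ R (m+1) j1)) ↔ j1 ≤ kk-1)
    (P8 : ((C (m+1) j2 = C m (kk-1) + 1 ∧ R (m+1) j2 ≤ R m (kk-1)) ∨ (C m (kk-1) = C (m+1) j2 + 1 ∧ R m (kk-1) ≤ R (m+1) j2)) ↔ j2 ≤ kk-1)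
    (P9 : ((C (m+1) j3 = C m (kk-1) + 1 ∧ R (m+1) j3 ≤ R m (kk-1)) ∨ (C m (kk-1) = C (m+1) j3 + 1 ∧ R m (kk-1) ≤ R (m+1) j3)) ↔ j3 ≤ kk-1)
    : False := by omega

set_option maxHeartbeats 1000000 in
/-- no column can take a value, change, and come back (single jump) -/
lemma single_jump (φ : Xgrid n k ↪g Xgrid M N) (hn : 2 ≤ n) {i j1 j2 j3 : ℕ}
    (hi : i < n) (h12 : j1 < j2) (h23 : j2 < j3) (h3 : j3 < k)
    (he : CC φ i j1 = CC φ i j3) (hne : CC φ i j1 ≠ CC φ i j2) : False := by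
  have hj1 : j1 < k := by omega
  have hj2 : j2 < k := by omega
  have hk0 : 0 < k := by omega
  have hk1 : k - 1 < k := by omega
  have htv0 := two_values φ hn hi hj2 hj1
  have htv : CC φ i j2 = CC φ i j1 + 2 ∨ CC φ i j1 = CC φ i j2 + 2 := by
    rcases htv0 with h | h | h
    · exact absurd h.symm hne
    · exact Or.inl h
    · exact Or.inr h
  by_cases hi1 : i + 1 < n
  · have P1 := pair φ hi1 hj2 hj2
    have P2 := pair φ hi1 h3 hj2
    have P3 := pair φ hi1 hj1 hj2
    have P4 := pair φ hi1 h3 h3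
    have P5 := pair φ hi1 hj1 h3
    have P6 := pair φ hi1 hj1 hk0
    have P7 := pair φ hi1 hj2 hk0
    have P8 := pair φ hi1 h3 hk0
    have P9 := pair φ hi1 hj2 h3
    exact sjR_core (CC φ) (RR φ) i j1 j2 j3 k h12 h23 he htv P1 P2 P3 P4 P5 P6 P7 P8 P9
  · obtain ⟨m, rfl⟩ : ∃ m, i = m + 1 := ⟨i - 1, by omega⟩
    have hm : m + 1 < n := by omega
    have P1 := pair φ hm hj2 hj1
    have P2 := pair φ hm hj2 hj2
    have P3 := pair φ hm hj2 h3
    have P4 := pair φ hm hj1 hj1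
    have P5 := pair φ hm hj1 hj2
    have P6 := pair φ hm hj1 h3
    have P7 := pair φ hm hk1 hj1
    have P8 := pair φ hm hk1 hj2
    have P9 := pair φ hm hk1 h3
    exact sjL_core (CC φ) (RR φ) m j1 j2 j3 k h12 h23 h3 he htv P1 P2 P3 P4 P5 P6 P7 P8 P9


/-- the first row where column `i` changes value (or `k` if constant) -/
def Th (φ : Xgrid n k ↪g Xgrid M N) (i : ℕ) : ℕ :=
  Nat.find (⟨k, Or.inl le_rfl⟩ : ∃ j, k ≤ j ∨ CC φ i j ≠ CC φ i 0)

lemma Th_le (φ : Xgrid n k ↪g Xgrid M N) (i : ℕ) : Th φ i ≤ k :=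
  Nat.find_le (Or.inl le_rfl)

lemma Th_spec (φ : Xgrid n k ↪g Xgrid M N) (i : ℕ) :
    k ≤ Th φ i ∨ CC φ i (Th φ i) ≠ CC φ i 0 :=
  Nat.find_spec (⟨k, Or.inl le_rfl⟩ : ∃ j, k ≤ j ∨ CC φ i j ≠ CC φ i 0)

lemma Th_pos (φ : Xgrid n k ↪g Xgrid M N) (i : ℕ) (hk : 0 < k) : 0 < Th φ i := by
  rcases Nat.eq_zero_or_pos (Th φ i) with h | h
  · have h2 := Th_spec φ i
    rw [h] at h2
    simp at h2
    omega
  · exact h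

lemma CC_below (φ : Xgrid n k ↪g Xgrid M N) {i j : ℕ} (hj : j < Th φ i) :
    CC φ i j = CC φ i 0 := by
  have := Nat.find_min (⟨k, Or.inl le_rfl⟩ : ∃ j, k ≤ j ∨ CC φ i j ≠ CC φ i 0) hj
  push_neg at this
  exact this.2

lemma CC_at (φ : Xgrid n k ↪g Xgrid M N) {i : ℕ} (h : Th φ i < k) :
    CC φ i (Th φ i) ≠ CC φ i 0 := by
  rcases Th_spec φ i with h' | h'
  · omega
  · exact h'

lemma CC_above (φ : Xgrid n k ↪g Xgrid M N) (hn : 2 ≤ n) {i j : ℕ} (hi : i < n)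
    (hj : Th φ i ≤ j) (hjk : j < k) : CC φ i j = CC φ i (Th φ i) := by
  rcases eq_or_lt_of_le hj with h | h
  · rw [h]
  · have hThk : Th φ i < k := by omega
    have h0 := CC_at φ hThk
    by_contra hne
    by_cases hcase : CC φ i j = CC φ i 0
    · exact single_jump φ hn hi (Th_pos φ i (by omega)) h hjk hcase.symm (Ne.symm h0)
    · have tv2 := two_values φ hn hi hjk (show 0 < k by omega)
      have tv3 := two_values φ hn hi hjk hThk
      have tv1 := two_values φ hn hi hThk (show 0 < k by omega)
      omega

private lemma q1_core (C R : ℕ → ℕ → ℕ) (i t kk : ℕ) (ht1 : 1 ≤ t) (ht2 : t ≤ kk - 2) (hkk : 2 ≤ kk)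
    (hA : C i (t-1) ≠ C i t)
    (hconst : C (i+1) (kk-1) = C (i+1) 0)
    (P1 : ((C (i+1) 0 = C i (t-1) + 1 ∧ R (i+1) 0 ≤ R i (t-1)) ∨ (C i (t-1) = C (i+1) 0 + 1 ∧ R i (t-1) ≤ R (i+1) 0)) ↔ 0 ≤ t-1)
    (P2 : ((C (i+1) 0 = C i t + 1 ∧ R (i+1) 0 ≤ R i t) ∨ (C i t = C (i+1) 0 + 1 ∧ R i t ≤ R (i+1) 0)) ↔ 0 ≤ t)
    (P3 : ((C (i+1) (kk-1) = C i (t-1) + 1 ∧ R (i+1) (kk-1) ≤ R i (t-1)) ∨ (C i (t-1) = C (i+1) (kk-1) + 1 ∧ R i (t-1) ≤ R (i+1) (kk-1))) ↔ kk-1 ≤ t-1)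
    (P4 : ((C (i+1) (kk-1) = C i t + 1 ∧ R (i+1) (kk-1) ≤ R i t) ∨ (C i t = C (i+1) (kk-1) + 1 ∧ R i t ≤ R (i+1) (kk-1))) ↔ kk-1 ≤ t)
    : False := by omega

/-- If column `i` jumps strictly before the last row, column `i+1` jumps too. -/
lemma Q1 (φ : Xgrid n k ↪g Xgrid M N) (hk : 2 ≤ k) {i : ℕ} (hi : i + 1 < n)
    (hjump : Th φ i ≤ k - 2) : Th φ (i+1) < k := by
  by_contra hcon
  have hconst : CC φ (i+1) (k-1) = CC φ (i+1) 0 := CC_below φ (by omega)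
  have ht1 : 1 ≤ Th φ i := Th_pos φ i (by omega)
  have hThk : Th φ i < k := by omega
  have hA : CC φ i (Th φ i - 1) ≠ CC φ i (Th φ i) := by
    rw [CC_below φ (by omega)]
    exact fun hh => CC_at φ hThk hh.symm
  have h0 : (0:ℕ) < k := by omega
  have hk1 : k - 1 < k := by omega
  have htm : Th φ i - 1 < k := by omega
  have P1 := pair φ hi htm h0
  have P2 := pair φ hi hThk h0
  have P3 := pair φ hi htm hk1
  have P4 := pair φ hi hThk hk1
  exact q1_core (CC φ) (RR φ) i (Th φ i) k ht1 hjump hk hA hconst P1 P2 P3 P4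

private lemma f4a_core (C R : ℕ → ℕ → ℕ) (i t t' kk : ℕ) (ht'1 : 1 ≤ t') (hlt : t' < t) (htk : t ≤ kk - 1) (hkk : 2 ≤ kk)
    (hv0 : C i 0 = C i t')
    (hvA : C i (kk-1) ≠ C i 0)
    (hvB : C (i+1) (t'-1) = C (i+1) 0)
    (hvB' : C (i+1) t' ≠ C (i+1) 0)
    (P1 : ((C (i+1) 0 = C i 0 + 1 ∧ R (i+1) 0 ≤ R i 0) ∨ (C i 0 = C (i+1) 0 + 1 ∧ R i 0 ≤ R (i+1) 0)) ↔ (0:ℕ) ≤ 0)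
    (P2 : ((C (i+1) t' = C i t' + 1 ∧ R (i+1) t' ≤ R i t') ∨ (C i t' = C (i+1) t' + 1 ∧ R i t' ≤ R (i+1) t')) ↔ t' ≤ t')
    (P3 : ((C (i+1) (t'-1) = C i (kk-1) + 1 ∧ R (i+1) (t'-1) ≤ R i (kk-1)) ∨ (C i (kk-1) = C (i+1) (t'-1) + 1 ∧ R i (kk-1) ≤ R (i+1) (t'-1))) ↔ t'-1 ≤ kk-1)
    (P4 : ((C (i+1) t' = C i (kk-1) + 1 ∧ R (i+1) t' ≤ R i (kk-1)) ∨ (C i (kk-1) = C (i+1) t' + 1 ∧ R i (kk-1) ≤ R (i+1) t')) ↔ t' ≤ kk-1)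
    : False := by omega

private lemma f4b_core (C R : ℕ → ℕ → ℕ) (i t t' kk : ℕ) (ht1 : 1 ≤ t) (hlt : t + 2 ≤ t') (htk : t' ≤ kk - 1) (hkk : 2 ≤ kk)
    (hA : C i (t-1) = C i 0)
    (hA' : C i t ≠ C i 0)
    (hAtop : C i (kk-1) = C i t)
    (hB : C (i+1) (t'-1) = C (i+1) 0)
    (hB' : C (i+1) t' ≠ C (i+1) 0)
    (P1 : ((C (i+1) 0 = C i (t-1) + 1 ∧ R (i+1) 0 ≤ R i (t-1)) ∨ (C i (t-1) = C (i+1) 0 + 1 ∧ R i (t-1) ≤ R (i+1) 0)) ↔ 0 ≤ t-1)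
    (P2 : ((C (i+1) 0 = C i t + 1 ∧ R (i+1) 0 ≤ R i t) ∨ (C i t = C (i+1) 0 + 1 ∧ R i t ≤ R (i+1) 0)) ↔ 0 ≤ t)
    (P3 : ((C (i+1) (t'-1) = C i (t-1) + 1 ∧ R (i+1) (t'-1) ≤ R i (t-1)) ∨ (C i (t-1) = C (i+1) (t'-1) + 1 ∧ R i (t-1) ≤ R (i+1) (t'-1))) ↔ t'-1 ≤ t-1)
    (P4 : ((C (i+1) (t'-1) = C i t + 1 ∧ R (i+1) (t'-1) ≤ R i t) ∨ (C i t = C (i+1) (t'-1) + 1 ∧ R i t ≤ R (i+1) (t'-1))) ↔ t'-1 ≤ t)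
    (P5 : ((C (i+1) t' = C i (kk-1) + 1 ∧ R (i+1) t' ≤ R i (kk-1)) ∨ (C i (kk-1) = C (i+1) t' + 1 ∧ R i (kk-1) ≤ R (i+1) t')) ↔ t' ≤ kk-1)
    (P6 : ((C (i+1) 0 = C i (kk-1) + 1 ∧ R (i+1) 0 ≤ R i (kk-1)) ∨ (C i (kk-1) = C (i+1) 0 + 1 ∧ R i (kk-1) ≤ R (i+1) 0)) ↔ 0 ≤ kk-1)
    : False := by omega

/-- If adjacent columns both jump, the jumps are at distance at most one,
with the right one not lower. -/
lemma F4 (φ : Xgrid n k ↪g Xgrid M N) (hn : 2 ≤ n) (hk : 2 ≤ k) {i : ℕ} (hi : i + 1 < n)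
    (h1 : Th φ i < k) (h2 : Th φ (i+1) < k) :
    Th φ i ≤ Th φ (i+1) ∧ Th φ (i+1) ≤ Th φ i + 1 := by
  have hi' : i < n := by omega
  have h0 : (0:ℕ) < k := by omega
  have hk1 : k - 1 < k := by omega
  constructor
  · by_contra hcon
    push_neg at hcon
    -- t' := Th φ (i+1) < t := Th φ i
    have ht'1 : 1 ≤ Th φ (i+1) := Th_pos φ (i+1) h0
    have hv0 : CC φ i 0 = CC φ i (Th φ (i+1)) := (CC_below φ (by omega)).symm
    have hvA : CC φ i (k-1) ≠ CC φ i 0 := by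
      rw [CC_above φ hn hi' (by omega) hk1]
      exact CC_at φ h1
    have hvB : CC φ (i+1) (Th φ (i+1) - 1) = CC φ (i+1) 0 := CC_below φ (by omega)
    have hvB' : CC φ (i+1) (Th φ (i+1)) ≠ CC φ (i+1) 0 := CC_at φ h2
    have ht'k : Th φ (i+1) < k := h2
    have ht'm : Th φ (i+1) - 1 < k := by omega
    have P1 := pair φ hi h0 h0
    have P2 := pair φ hi ht'k ht'k
    have P3 := pair φ hi hk1 ht'm
    have P4 := pair φ hi hk1 ht'k
    exact f4a_core (CC φ) (RR φ) i (Th φ i) (Th φ (i+1)) k ht'1 hcon (by omega) hk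
      hv0 hvA hvB hvB' P1 P2 P3 P4
  · by_contra hcon
    push_neg at hcon
    -- t' := Th φ (i+1) ≥ t + 2
    have ht1 : 1 ≤ Th φ i := Th_pos φ i h0
    have hA : CC φ i (Th φ i - 1) = CC φ i 0 := CC_below φ (by omega)
    have hA' : CC φ i (Th φ i) ≠ CC φ i 0 := CC_at φ h1
    have hAtop : CC φ i (k-1) = CC φ i (Th φ i) := CC_above φ hn hi' (by omega) hk1
    have hB : CC φ (i+1) (Th φ (i+1) - 1) = CC φ (i+1) 0 := CC_below φ (by omega)
    have hB' : CC φ (i+1) (Th φ (i+1)) ≠ CC φ (i+1) 0 := CC_at φ h2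
    have htm : Th φ i - 1 < k := by omega
    have htk : Th φ i < k := h1
    have ht'm : Th φ (i+1) - 1 < k := by omega
    have P1 := pair φ hi htm h0
    have P2 := pair φ hi htk h0
    have P3 := pair φ hi htm ht'm
    have P4 := pair φ hi htk ht'm
    have P5 := pair φ hi hk1 h2
    have P6 := pair φ hi hk1 h0
    exact f4b_core (CC φ) (RR φ) i (Th φ i) (Th φ (i+1)) k ht1 (by omega) (by omega) hk
      hA hA' hAtop hB hB' P1 P2 P3 P4 P5 P6

/-- rightward propagation chain for jump thresholds -/
lemma chain (φ : Xgrid n k ↪g Xgrid M N) (hn : 2 ≤ n) (hk : 2 ≤ k) :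
    ∀ t i, i + t < n → Th φ i < k → Th φ i + t ≤ k - 2 →
      Th φ i ≤ Th φ (i + t) ∧ Th φ (i + t) ≤ Th φ i + t := by
  intro t
  induction t with
  | zero => intro i _ _ _; simp only [Nat.add_zero]; omega
  | succ s ih =>
    intro i h1 h2 h3
    have IH := ih i (by omega) h2 (by omega)
    have hQ : Th φ (i + s + 1) < k := Q1 φ hk (by omega) (by omega)
    have hF := F4 φ hn hk (i := i + s) (by omega) (by omega) hQ
    have : i + s + 1 = i + (s + 1) := by omega
    rw [this] at hQ hF
    omega

/-- main combinatorial lemma: a window of `n` consecutive rows on which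
every column of the image is constant -/
lemma window (φ : Xgrid n k ↪g Xgrid M N) (hn : 1 ≤ n) (hk : k = 4 * n - 1) :
    ∃ r, r + n ≤ k ∧ ∀ i j, i < n → r ≤ j → j < r + n → CC φ i j = CC φ i r := by
  by_cases hn2 : 2 ≤ n
  · have hk2 : 2 ≤ k := by omega
    classical
    by_cases hS : ∃ i, i < n ∧ Th φ i ≤ k - 2
    · obtain ⟨i0, hi0n, hi0, hmin⟩ :
          ∃ i0, i0 < n ∧ Th φ i0 ≤ k - 2 ∧ ∀ i, i < n → Th φ i ≤ k - 2 → Th φ i0 ≤ Th φ i := by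
        obtain ⟨i1, hi1⟩ := hS
        obtain ⟨i0, hi0S, hmin⟩ := (Finset.range n |>.filter (fun i => Th φ i ≤ k - 2)).exists_min_image
          (fun i => Th φ i) ⟨i1, by simp [Finset.mem_filter, Finset.mem_range]; exact ⟨hi1.1, hi1.2⟩⟩
        simp only [Finset.mem_filter, Finset.mem_range] at hi0S hmin
        exact ⟨i0, hi0S.1, hi0S.2, fun i h1 h2 => hmin i ⟨h1, h2⟩⟩
      by_cases hcase : n + 1 ≤ Th φ i0
      · refine ⟨Th φ i0 - n, by omega, ?_⟩
        intro i j hi hj1 hj2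
        have hbig : Th φ i0 ≤ Th φ i := by
          by_cases hiS : Th φ i ≤ k - 2
          · exact hmin i hi hiS
          · omega
        have e1 : CC φ i j = CC φ i 0 := CC_below φ (show j < Th φ i by omega)
        have e2 : CC φ i (Th φ i0 - n) = CC φ i 0 := CC_below φ (show Th φ i0 - n < Th φ i by omega)
        rw [e1, e2]
      · refine ⟨2 * n - 1, by omega, ?_⟩
        intro i j hi hj1 hj2
        have hsplit : Th φ i ≤ 2 * n - 1 ∨ 3 * n - 1 ≤ Th φ i := by
          by_cases hiS : Th φ i ≤ k - 2
          · rcases le_or_gt i0 i with hle | hlt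
            · have hc := chain φ hn2 hk2 (i - i0) i0 (by omega) (by omega) (by omega)
              rw [Nat.add_sub_cancel' hle] at hc
              left; omega
            · by_cases hb : Th φ i + (i0 - i) ≤ k - 2
              · have hc := chain φ hn2 hk2 (i0 - i) i (by omega) (by omega) hb
                rw [Nat.add_sub_cancel' (by omega : i ≤ i0)] at hc
                left; omega
              · right; omega
          · right; omega
        rcases hsplit with hlo | hhi
        · have e1 := CC_above φ hn2 hi (j := j) (by omega) (by omega)
          have e2 := CC_above φ hn2 hi (j := 2 * n - 1) (by omega) (by omega)
          rw [e1, e2]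
        · have e1 : CC φ i j = CC φ i 0 := CC_below φ (show j < Th φ i by omega)
          have e2 : CC φ i (2 * n - 1) = CC φ i 0 := CC_below φ (show 2 * n - 1 < Th φ i by omega)
          rw [e1, e2]
    · push_neg at hS
      refine ⟨0, by omega, ?_⟩
      intro i j hi hj1 hj2
      have := hS i hi
      have e1 : CC φ i j = CC φ i 0 := CC_below φ (show j < Th φ i by omega)
      rw [e1]
  · -- n = 1
    have : n = 1 := by omega
    subst this
    exact ⟨0, by omega, fun i j hi hj1 hj2 => by
      have : j = 0 := by omega
      rw [this]⟩

private lemma wiggle_core (C R : ℕ → ℕ → ℕ) (i r : ℕ)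
    (c1 : C i (r+1) = C i r) (c2 : C (i+1) (r+1) = C (i+1) r)
    (c3 : C (i+1+1) (r+1) = C (i+1+1) r)
    (P1 : ((C (i+1) r = C i r + 1 ∧ R (i+1) r ≤ R i r) ∨ (C i r = C (i+1) r + 1 ∧ R i r ≤ R (i+1) r)) ↔ r ≤ r)
    (P2 : ((C (i+1) (r+1) = C i r + 1 ∧ R (i+1) (r+1) ≤ R i r) ∨ (C i r = C (i+1) (r+1) + 1 ∧ R i r ≤ R (i+1) (r+1))) ↔ r+1 ≤ r)
    (P3 : ((C (i+1+1) r = C (i+1) (r+1) + 1 ∧ R (i+1+1) r ≤ R (i+1) (r+1)) ∨ (C (i+1) (r+1) = C (i+1+1) r + 1 ∧ R (i+1) (r+1) ≤ R (i+1+1) r)) ↔ r ≤ r+1)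
    (P4 : ((C (i+1+1) (r+1) = C (i+1) (r+1) + 1 ∧ R (i+1+1) (r+1) ≤ R (i+1) (r+1)) ∨ (C (i+1) (r+1) = C (i+1+1) (r+1) + 1 ∧ R (i+1) (r+1) ≤ R (i+1+1) (r+1))) ↔ r+1 ≤ r+1)
    (P5 : ((C (i+1+1) (r+1) = C (i+1) r + 1 ∧ R (i+1+1) (r+1) ≤ R (i+1) r) ∨ (C (i+1) r = C (i+1+1) (r+1) + 1 ∧ R (i+1) r ≤ R (i+1+1) (r+1))) ↔ r+1 ≤ r)
    : C (i+1+1) r ≠ C i r := by omega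

private lemma dichotomy (d : ℕ → ℕ) (n : ℕ)
    (hstep : ∀ i, i + 1 < n → (d (i+1) = d i + 1 ∨ d i = d (i+1) + 1))
    (hcoh : ∀ i, i + 1 + 1 < n → d (i+1+1) ≠ d i) :
    (∀ i, i < n → d i = d 0 + i) ∨ (∀ i, i < n → d i + i = d 0) := by
  by_cases hd : ∀ i, i + 1 < n → d (i+1) = d i + 1
  · left
    intro i
    induction i with
    | zero => intro _; omega
    | succ m ih =>
      intro h
      have h1 := hd m (by omega)
      have h2 := ih (by omega)
      omega
  · right
    push_neg at hd
    obtain ⟨i0, hi0, hne0⟩ := hd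
    have key : ∀ i, i + 1 < n → (d (i+1) = d i + 1 ↔ d 1 = d 0 + 1) := by
      intro i
      induction i with
      | zero => intro _; simp
      | succ m ih =>
        intro h
        have h1 := ih (by omega)
        have s1 := hstep m (by omega)
        have s2 := hstep (m+1) (by omega)
        have c := hcoh m (by omega)
        omega
    have hdown : ∀ i, i + 1 < n → d i = d (i+1) + 1 := by
      intro i hi
      have k1 := key i hi
      have k0 := key i0 hi0
      have s := hstep i hi
      have s0 := hstep i0 hi0
      omega
    intro i
    induction i with
    | zero => intro _; omega
    | succ m ih =>
      intro h
      have h1 := hdown m (by omega)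
      have h2 := ih (by omega)
      omega

end XgridAux

open XgridAux in
/-- for n ≥ 1, every induced-subgraph embedding φ of
`X_{n,4n−1}` into `X_{M,N}` (M ≥ n, N ≥ 4n−1) contains a copy of `X_{n,n}`
occupying exactly n contiguous columns of `X_{M,N}` — i.e. there is an
embedding ψ of `X_{n,n}` whose image lies inside the image of φ, and a column
offset c with c + n ≤ M such that ψ sends column i of `X_{n,n}` into column
c + i of `X_{M,N}`. -/
theorem Xgrid_embedding_contains_column_grid (n M N : ℕ) (hn : 1 ≤ n)
    (hM : n ≤ M) (hN : 4 * n - 1 ≤ N)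
    (φ : Xgrid n (4 * n - 1) ↪g Xgrid M N) :
    ∃ ψ : Xgrid n n ↪g Xgrid M N, ∃ c : ℕ,
      c + n ≤ M ∧
      (∀ v : Fin n × Fin n, ((ψ v).1 : ℕ) = c + (v.1 : ℕ)) ∧
      (∀ v : Fin n × Fin n, ∃ u : Fin n × Fin (4 * n - 1), ψ v = φ u) := by
  classical
  obtain ⟨r, hrn, hwin⟩ := window φ hn rfl
  have hrk : r < 4 * n - 1 := by omega
  have hstep : ∀ i, i + 1 < n → (CC φ (i+1) r = CC φ i r + 1 ∨ CC φ i r = CC φ (i+1) r + 1) := by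
    intro i hi
    have P := pair φ hi hrk hrk
    omega
  have hcoh : ∀ i, i + 1 + 1 < n → CC φ (i+1+1) r ≠ CC φ i r := by
    intro i hi
    have hr1 : r + 1 < 4 * n - 1 := by omega
    have c1 : CC φ i (r+1) = CC φ i r := hwin i (r+1) (by omega) (by omega) (by omega)
    have c2 : CC φ (i+1) (r+1) = CC φ (i+1) r := hwin (i+1) (r+1) (by omega) (by omega) (by omega)
    have c3 : CC φ (i+1+1) (r+1) = CC φ (i+1+1) r := hwin (i+1+1) (r+1) (by omega) (by omega) (by omega)
    have P1 := pair φ (show i+1 < n by omega) hrk hrk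
    have P2 := pair φ (show i+1 < n by omega) hrk hr1
    have P3 := pair φ (show i+1+1 < n by omega) hr1 hrk
    have P4 := pair φ (show i+1+1 < n by omega) hr1 hr1
    have P5 := pair φ (show i+1+1 < n by omega) hrk hr1
    exact wiggle_core (CC φ) (RR φ) i r c1 c2 c3 P1 P2 P3 P4 P5
  rcases dichotomy (fun i => CC φ i r) n hstep hcoh with hup | hdown
  · -- increasing case
    have hB : ∀ v : Fin n × Fin n, r + (v.2 : ℕ) < 4 * n - 1 := fun v => by
      have := v.2.isLt; omega
    let ι : Xgrid n n ↪g Xgrid n (4 * n - 1) :=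
      { toFun := fun v => (v.1, ⟨r + (v.2 : ℕ), hB v⟩),
        inj' := by
          intro a b hab
          rw [Prod.mk.injEq] at hab
          have h2 := congrArg Fin.val hab.2
          simp only [] at h2
          exact Prod.ext hab.1 (Fin.ext (by omega))
        map_rel_iff' := by
          intro a b
          rw [xgrid_adj, xgrid_adj]
          show ((b.1 : ℕ) = (a.1 : ℕ) + 1 ∧ r + (b.2 : ℕ) ≤ r + (a.2 : ℕ)) ∨
            ((a.1 : ℕ) = (b.1 : ℕ) + 1 ∧ r + (a.2 : ℕ) ≤ r + (b.2 : ℕ)) ↔ _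
          constructor <;> (intro h; rcases h with ⟨h1, h2⟩ | ⟨h1, h2⟩)
          · exact Or.inl ⟨h1, by omega⟩
          · exact Or.inr ⟨h1, by omega⟩
          · exact Or.inl ⟨h1, by omega⟩
          · exact Or.inr ⟨h1, by omega⟩ }
    refine ⟨ι.trans φ, CC φ 0 r, ?_, ?_, fun v => ⟨ι v, rfl⟩⟩
    · have h1 := hup (n-1) (by omega)
      have h2 := CC_lt φ (show n - 1 < n by omega) hrk
      omega
    · intro v
      show ((φ (ι v)).1 : ℕ) = CC φ 0 r + (v.1 : ℕ)
      have e : ((φ (ι v)).1 : ℕ) = CC φ (v.1 : ℕ) (r + (v.2 : ℕ)) :=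
        (CC_eq φ v.1 ⟨r + (v.2 : ℕ), hB v⟩).symm
      rw [e, hwin (v.1 : ℕ) (r + (v.2 : ℕ)) v.1.isLt (by omega) (by have := v.2.isLt; omega)]
      have := hup (v.1 : ℕ) v.1.isLt
      simpa using this
  · -- decreasing case
    have hd0 : CC φ (n-1) r + (n-1) = CC φ 0 r := by
      have := hdown (n-1) (by omega)
      simpa using this
    have hA : ∀ v : Fin n × Fin n, n - 1 - (v.1 : ℕ) < n := fun v => by
      have := v.1.isLt; omega
    have hB : ∀ v : Fin n × Fin n, r + (n - 1 - (v.2 : ℕ)) < 4 * n - 1 := fun v => by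
      have := v.2.isLt; omega
    let ι : Xgrid n n ↪g Xgrid n (4 * n - 1) :=
      { toFun := fun v => (⟨n - 1 - (v.1 : ℕ), hA v⟩, ⟨r + (n - 1 - (v.2 : ℕ)), hB v⟩),
        inj' := by
          intro a b hab
          rw [Prod.mk.injEq] at hab
          have h1 := congrArg Fin.val hab.1
          have h2 := congrArg Fin.val hab.2
          simp only [] at h1 h2
          have ha1 := a.1.isLt
          have hb1 := b.1.isLt
          have ha2 := a.2.isLt
          have hb2 := b.2.isLt
          exact Prod.ext (Fin.ext (by omega)) (Fin.ext (by omega))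
        map_rel_iff' := by
          intro a b
          rw [xgrid_adj, xgrid_adj]
          show ((n - 1 - (b.1 : ℕ)) = (n - 1 - (a.1 : ℕ)) + 1 ∧ r + (n - 1 - (b.2 : ℕ)) ≤ r + (n - 1 - (a.2 : ℕ))) ∨
            ((n - 1 - (a.1 : ℕ)) = (n - 1 - (b.1 : ℕ)) + 1 ∧ r + (n - 1 - (a.2 : ℕ)) ≤ r + (n - 1 - (b.2 : ℕ))) ↔ _
          have ha1 := a.1.isLt
          have hb1 := b.1.isLt
          have ha2 := a.2.isLt
          have hb2 := b.2.isLt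
          constructor <;> (intro h; rcases h with ⟨h1, h2⟩ | ⟨h1, h2⟩)
          · exact Or.inr ⟨by omega, by omega⟩
          · exact Or.inl ⟨by omega, by omega⟩
          · exact Or.inr ⟨by omega, by omega⟩
          · exact Or.inl ⟨by omega, by omega⟩ }
    refine ⟨ι.trans φ, CC φ 0 r - (n-1), ?_, ?_, fun v => ⟨ι v, rfl⟩⟩
    · have h2 := CC_lt φ (show 0 < n by omega) hrk
      omega
    · intro v
      show ((φ (ι v)).1 : ℕ) = CC φ 0 r - (n-1) + (v.1 : ℕ)
      have e : ((φ (ι v)).1 : ℕ) = CC φ (n - 1 - (v.1 : ℕ)) (r + (n - 1 - (v.2 : ℕ))) :=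
        (CC_eq φ ⟨n - 1 - (v.1 : ℕ), hA v⟩ ⟨r + (n - 1 - (v.2 : ℕ)), hB v⟩).symm
      rw [e, hwin (n - 1 - (v.1 : ℕ)) (r + (n - 1 - (v.2 : ℕ))) (hA v) (by omega)
        (by have := v.2.isLt; omega)]
      have h3 := hdown (n - 1 - (v.1 : ℕ)) (hA v)
      have hv1 := v.1.isLt
      omega
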